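/- Let N ≥ q ≥ 1 be integers and let π : [q]^[q] × Inj(q,N) → [N]^[q] be the map (s,a) ↦ a∘s, where Inj(q,N) is the set of injections from [q] to [N]. Then π is surjective and for any b ∈ [N]^[q], the cardinality of the fiber π⁻¹({b}) equals (N-|b|)_{q-|b|} · (q)_{|b|}, where |b| denotes the cardinality of the image of b and (n)_k = n!/(n-k)! is the falling factorial. -/
import Mathlib


open Function Finset

universe u v

lemma embedding_heq_of {α α' : Type u} {β : Type v} (h : α = α') {f : α ↪ β} {f' : α' ↪ β}
    (H : ∀ (a : α) (a' : α'), HEq a a' → f a = f' a') : HEq f f' := by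
  subst h
  apply heq_of_eq
  apply DFunLike.ext
  intro a
  exact H a a HEq.rfl

section Aux

variable {q N : ℕ} (S : Finset (Fin N))

noncomputable def fwdσ [Nonempty (Fin q)]
    (a : Fin q ↪ Fin N) (h : ∀ x ∈ S, ∃ j, a j = x) :
    {x : Fin N // x ∈ S} ↪ Fin q :=
  ⟨fun x => Function.invFun a x.1, by
    intro x y hxy
    have hxy' : Function.invFun a x.1 = Function.invFun a y.1 := hxy
    have hx : a (Function.invFun a x.1) = x.1 := Function.invFun_eq (h x.1 x.2)
    have hy : a (Function.invFun a y.1) = y.1 := Function.invFun_eq (h y.1 y.2)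
    apply Subtype.ext
    rw [← hx, ← hy, hxy']⟩

lemma fwdσ_spec [Nonempty (Fin q)] (a : Fin q ↪ Fin N) (h : ∀ x ∈ S, ∃ j, a j = x)
    (x : {x : Fin N // x ∈ S}) : a (fwdσ S a h x) = x.1 :=
  Function.invFun_eq (h x.1 x.2)

noncomputable def fwdτ [Nonempty (Fin q)]
    (a : Fin q ↪ Fin N) (h : ∀ x ∈ S, ∃ j, a j = x) :
    {j : Fin q // j ∉ Finset.univ.image (fwdσ S a h)} ↪ {y : Fin N // y ∉ S} :=
  ⟨fun j => ⟨a j.1, by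
      intro hmem
      apply j.2
      refine Finset.mem_image.2 ⟨⟨a j.1, hmem⟩, Finset.mem_univ _, ?_⟩
      exact Function.leftInverse_invFun a.injective j.1⟩, by
    intro j j' hjj'
    exact Subtype.ext (a.injective (congrArg Subtype.val hjj'))⟩

variable [Nonempty {x : Fin N // x ∈ S}]

noncomputable def bwdFun (σ : {x : Fin N // x ∈ S} ↪ Fin q)
    (τ : {j : Fin q // j ∉ Finset.univ.image σ} ↪ {y : Fin N // y ∉ S}) :
    Fin q → Fin N := fun j =>
  if hj : j ∈ Finset.univ.image σ then (Function.invFun σ j).1 else (τ ⟨j, hj⟩).1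

lemma bwdFun_mem {σ : {x : Fin N // x ∈ S} ↪ Fin q}
    {τ : {j : Fin q // j ∉ Finset.univ.image σ} ↪ {y : Fin N // y ∉ S}}
    {j : Fin q} (hj : j ∈ Finset.univ.image σ) :
    bwdFun S σ τ j = (Function.invFun σ j).1 ∧ σ (Function.invFun (⇑σ) j) = j := by
  obtain ⟨x, -, hx⟩ := Finset.mem_image.1 hj
  exact ⟨dif_pos hj, Function.invFun_eq ⟨x, hx⟩⟩

lemma bwdFun_not_mem {σ : {x : Fin N // x ∈ S} ↪ Fin q}
    {τ : {j : Fin q // j ∉ Finset.univ.image σ} ↪ {y : Fin N // y ∉ S}}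
    {j : Fin q} (hj : j ∉ Finset.univ.image σ) :
    bwdFun S σ τ j = (τ ⟨j, hj⟩).1 := dif_neg hj

lemma bwdFun_apply_σ {σ : {x : Fin N // x ∈ S} ↪ Fin q}
    {τ : {j : Fin q // j ∉ Finset.univ.image σ} ↪ {y : Fin N // y ∉ S}}
    (x : {x : Fin N // x ∈ S}) : bwdFun S σ τ (σ x) = x.1 := by
  have hmem : σ x ∈ Finset.univ.image σ :=
    Finset.mem_image.2 ⟨x, Finset.mem_univ _, rfl⟩
  rw [(bwdFun_mem S hmem).1, Function.leftInverse_invFun σ.injective x]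

lemma bwdFun_injective (σ : {x : Fin N // x ∈ S} ↪ Fin q)
    (τ : {j : Fin q // j ∉ Finset.univ.image σ} ↪ {y : Fin N // y ∉ S}) :
    Function.Injective (bwdFun S σ τ) := by
  intro j j' hjj'
  by_cases hj : j ∈ Finset.univ.image σ <;> by_cases hj' : j' ∈ Finset.univ.image σ
  · obtain ⟨h1, h2⟩ := bwdFun_mem S (τ := τ) hj
    obtain ⟨h1', h2'⟩ := bwdFun_mem S (τ := τ) hj'
    rw [h1, h1'] at hjj'
    rw [← h2, ← h2', Subtype.ext hjj']
  · rw [(bwdFun_mem S (τ := τ) hj).1, bwdFun_not_mem S hj'] at hjj'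
    have hmem := (Function.invFun (⇑σ) j).2
    rw [hjj'] at hmem
    exact absurd hmem (τ ⟨j', hj'⟩).2
  · rw [bwdFun_not_mem S hj, (bwdFun_mem S (τ := τ) hj').1] at hjj'
    have hmem := (Function.invFun (⇑σ) j').2
    rw [← hjj'] at hmem
    exact absurd hmem (τ ⟨j, hj⟩).2
  · rw [bwdFun_not_mem S hj, bwdFun_not_mem S hj'] at hjj'
    exact congrArg Subtype.val (τ.injective (Subtype.ext hjj'))

lemma bwdFun_surjOnS (σ : {x : Fin N // x ∈ S} ↪ Fin q)
    (τ : {j : Fin q // j ∉ Finset.univ.image σ} ↪ {y : Fin N // y ∉ S}) :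
    ∀ x ∈ S, ∃ j, bwdFun S σ τ j = x := fun x hx =>
  ⟨σ ⟨x, hx⟩, bwdFun_apply_σ S ⟨x, hx⟩⟩

noncomputable def e2 [Nonempty (Fin q)] :
    {a : Fin q ↪ Fin N // ∀ x ∈ S, ∃ j, a j = x} ≃
      Σ σ : {x : Fin N // x ∈ S} ↪ Fin q,
        ({j : Fin q // j ∉ Finset.univ.image σ} ↪ {y : Fin N // y ∉ S}) where
  toFun p := ⟨fwdσ S p.1 p.2, fwdτ S p.1 p.2⟩
  invFun st := ⟨⟨bwdFun S st.1 st.2, bwdFun_injective S st.1 st.2⟩, bwdFun_surjOnS S st.1 st.2⟩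
  left_inv := by
    rintro ⟨a, h⟩
    refine Subtype.ext (DFunLike.ext _ _ fun j => ?_)
    show bwdFun S (fwdσ S a h) (fwdτ S a h) j = a j
    by_cases hj : j ∈ Finset.univ.image (fwdσ S a h)
    · obtain ⟨h1, h2⟩ := bwdFun_mem S (τ := fwdτ S a h) hj
      rw [h1]
      have hval : a (fwdσ S a h (Function.invFun (⇑(fwdσ S a h)) j)) =
          (Function.invFun (⇑(fwdσ S a h)) j).1 :=
        fwdσ_spec S a h _
      rw [h2] at hval
      exact hval.symm
    · rw [bwdFun_not_mem S hj]
      rfl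
  right_inv := by
    rintro ⟨σ, τ⟩
    beta_reduce
    set a : Fin q ↪ Fin N := ⟨bwdFun S σ τ, bwdFun_injective S σ τ⟩ with ha
    have hσ : fwdσ S a (bwdFun_surjOnS S σ τ) = σ := by
      refine DFunLike.ext _ _ fun x => ?_
      apply bwdFun_injective S σ τ
      have h1 : a (fwdσ S a (bwdFun_surjOnS S σ τ) x) = x.1 :=
        fwdσ_spec S a (bwdFun_surjOnS S σ τ) x
      show bwdFun S σ τ _ = bwdFun S σ τ _
      rw [bwdFun_apply_σ S x]
      exact h1
    refine Sigma.ext hσ ?_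
    refine embedding_heq_of (congrArg (fun e : {x : Fin N // x ∈ S} ↪ Fin q => {j : Fin q // j ∉ Finset.univ.image e}) hσ) ?_
    rintro ⟨j, hj⟩ ⟨j', hj'⟩ hjj'
    have hval : j = j' := by
      have := Subtype.heq_iff_coe_eq (fun x => iff_of_eq (congrArg (fun e : {x : Fin N // x ∈ S} ↪ Fin q => x ∉ Finset.univ.image e) hσ)) |>.1 hjj'
      exact this
    subst hval
    apply Subtype.ext
    show bwdFun S σ τ j = (τ ⟨j, hj'⟩).1
    exact bwdFun_not_mem S hj'

end Aux

noncomputable def e1 {q N : ℕ} [Nonempty (Fin q)] (b : Fin q → Fin N) :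
    {sa : (Fin q → Fin q) × (Fin q ↪ Fin N) // (sa.2 : Fin q → Fin N) ∘ sa.1 = b} ≃
      {a : Fin q ↪ Fin N // ∀ x ∈ Finset.univ.image b, ∃ j, a j = x} where
  toFun p := ⟨p.1.2, by
    intro x hx
    obtain ⟨i, -, rfl⟩ := Finset.mem_image.1 hx
    exact ⟨p.1.1 i, congrFun p.2 i⟩⟩
  invFun a := ⟨⟨fun i => Function.invFun a.1 (b i), a.1⟩, by
    funext i
    exact Function.invFun_eq (a.2 (b i) (Finset.mem_image_of_mem b (Finset.mem_univ i)))⟩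
  left_inv := by
    rintro ⟨⟨s, a⟩, h⟩
    apply Subtype.ext
    refine Prod.ext ?_ rfl
    funext i
    apply a.injective
    show a (Function.invFun a (b i)) = a (s i)
    rw [Function.invFun_eq ⟨s i, congrFun h i⟩]
    exact (congrFun h i).symm
  right_inv := by
    rintro ⟨a, h⟩
    rfl

/-- For `N ≥ q ≥ 1`, the map `π : [q]^[q] × Inj(q,N) → [N]^[q]`,
`(s,a) ↦ a ∘ s`, is surjective, and the fiber over any `b : [q] → [N]` has cardinality
`(N-|b|)_{q-|b|} · (q)_{|b|}`, where `|b|` is the cardinality of the image of `b`. -/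
theorem stmt_0 (q N : ℕ) (hq : 1 ≤ q) (hqN : q ≤ N) :
    Function.Surjective
        (fun sa : (Fin q → Fin q) × (Fin q ↪ Fin N) => (sa.2 : Fin q → Fin N) ∘ sa.1) ∧
      ∀ b : Fin q → Fin N,
        Fintype.card {sa : (Fin q → Fin q) × (Fin q ↪ Fin N) //
            (sa.2 : Fin q → Fin N) ∘ sa.1 = b} =
          (N - (Finset.univ.image b).card).descFactorial (q - (Finset.univ.image b).card) *
            q.descFactorial (Finset.univ.image b).card := by
  classical
  haveI : Nonempty (Fin q) := ⟨⟨0, hq⟩⟩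
  have key : ∀ b : Fin q → Fin N,
      Fintype.card {sa : (Fin q → Fin q) × (Fin q ↪ Fin N) //
          (sa.2 : Fin q → Fin N) ∘ sa.1 = b} =
        (N - (Finset.univ.image b).card).descFactorial (q - (Finset.univ.image b).card) *
          q.descFactorial (Finset.univ.image b).card := by
    intro b
    set S : Finset (Fin N) := Finset.univ.image b with hS
    haveI : Nonempty {x : Fin N // x ∈ S} :=
      ⟨⟨b ⟨0, hq⟩, Finset.mem_image_of_mem b (Finset.mem_univ _)⟩⟩
    rw [Fintype.card_congr ((e1 b).trans (e2 S)), Fintype.card_sigma]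
    have hcard2 : Fintype.card {y : Fin N // y ∉ S} = N - S.card := by
      rw [Fintype.card_subtype_compl, Fintype.card_fin, Fintype.card_coe]
    have hconst : ∀ σ : {x : Fin N // x ∈ S} ↪ Fin q,
        Fintype.card ({j : Fin q // j ∉ Finset.univ.image σ} ↪ {y : Fin N // y ∉ S})
          = (N - S.card).descFactorial (q - S.card) := by
      intro σ
      rw [Fintype.card_embedding_eq, hcard2]
      congr 1
      rw [Fintype.card_subtype_compl, Fintype.card_fin, Fintype.card_coe,
        Finset.card_image_of_injective _ σ.injective, Finset.card_univ, Fintype.card_coe]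
    simp only [hconst]
    rw [Finset.sum_const, smul_eq_mul, Finset.card_univ, Fintype.card_embedding_eq,
      Fintype.card_coe, Fintype.card_fin]
    exact Nat.mul_comm _ _
  have hk : ∀ b : Fin q → Fin N, (Finset.univ.image b).card ≤ q := fun b =>
    le_trans Finset.card_image_le (by simp)
  refine ⟨fun b => ?_, key⟩
  have hpos : 0 < Fintype.card {sa : (Fin q → Fin q) × (Fin q ↪ Fin N) //
      (sa.2 : Fin q → Fin N) ∘ sa.1 = b} := by
    rw [key b]
    have h1 : 0 < (N - (Finset.univ.image b).card).descFactorial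
        (q - (Finset.univ.image b).card) := by
      apply Nat.pos_of_ne_zero
      intro h0
      have := Nat.descFactorial_eq_zero_iff_lt.1 h0
      have := hk b
      omega
    have h2 : 0 < q.descFactorial (Finset.univ.image b).card := by
      apply Nat.pos_of_ne_zero
      intro h0
      have := Nat.descFactorial_eq_zero_iff_lt.1 h0
      have := hk b
      omega
    exact Nat.mul_pos h1 h2
  obtain ⟨⟨sa, hsa⟩⟩ := Fintype.card_pos_iff.1 hpos
  exact ⟨sa, hsa⟩
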